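/- Let 0 < a < b < 1 and set c = [ (√(1−b) − √(1−a)) / (√a − √b) ]² and t = c/(1+c). Then t ∈ (a, b) and √((1−t)(1−a)) + √(t·a) = √((1−t)(1−b)) + √(t·b); equivalently, the uniform pairwise rates satisfy r(a, t) = r(t, b). -/

import Mathlib

/-- The uniform pairwise rate `r(p,q) = -2·log[√((1-p)(1-q)) + √(pq)]`. -/
noncomputable def uniRate (p q : ℝ) : ℝ :=
  -2 * Real.log (Real.sqrt ((1 - p) * (1 - q)) + Real.sqrt (p * q))

/-- **The intermediate level equalizing the two pairwise rates.**
For `0 < a < b < 1`, `c = [(√(1-b) - √(1-a))/(√a - √b)]²` and `t = c/(1+c)`, we have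
`t ∈ (a,b)` and `√((1-t)(1-a)) + √(t·a) = √((1-t)(1-b)) + √(t·b)`;
equivalently `r(a,t) = r(t,b)`. -/
theorem intermediate_level_equalizes_rates
    (a b : ℝ) (ha : 0 < a) (hab : a < b) (hb : b < 1)
    (c t : ℝ)
    (hc : c = ((Real.sqrt (1 - b) - Real.sqrt (1 - a)) /
      (Real.sqrt a - Real.sqrt b)) ^ 2)
    (ht : t = c / (1 + c)) :
    (a < t ∧ t < b) ∧
      Real.sqrt ((1 - t) * (1 - a)) + Real.sqrt (t * a)
        = Real.sqrt ((1 - t) * (1 - b)) + Real.sqrt (t * b) ∧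
      uniRate a t = uniRate t b := by
  have ha1 : a < 1 := lt_trans hab hb
  have hb0 : 0 < b := lt_trans ha hab
  set s := Real.sqrt a with hs
  set u := Real.sqrt b with hu
  set v := Real.sqrt (1 - a) with hv
  set w := Real.sqrt (1 - b) with hw
  have hs2 : s ^ 2 = a := Real.sq_sqrt ha.le
  have hu2 : u ^ 2 = b := Real.sq_sqrt hb0.le
  have hv2 : v ^ 2 = 1 - a := Real.sq_sqrt (by linarith)
  have hw2 : w ^ 2 = 1 - b := Real.sq_sqrt (by linarith)
  have hs0 : 0 < s := Real.sqrt_pos.mpr ha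
  have hu0 : 0 < u := Real.sqrt_pos.mpr hb0
  have hv0 : 0 < v := Real.sqrt_pos.mpr (by linarith)
  have hw0 : 0 < w := Real.sqrt_pos.mpr (by linarith)
  have hsu : s < u := Real.sqrt_lt_sqrt ha.le hab
  have hwv : w < v := Real.sqrt_lt_sqrt (by linarith) (by linarith)
  clear_value s u v w
  obtain ⟨k, hkdef⟩ : ∃ k : ℝ, k = (v - w) / (u - s) := ⟨_, rfl⟩
  have hus : u - s ≠ 0 := by linarith
  have hk : k * (u - s) = v - w := by rw [hkdef]; exact div_mul_cancel₀ _ hus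
  have hk0 : 0 < k := by rw [hkdef]; exact div_pos (by linarith) (by linarith)
  have hck : c = k ^ 2 := by
    rw [hc, hkdef]
    rw [div_pow, div_pow]
    congr 1 <;> ring
  have h1c : (0:ℝ) < 1 + k ^ 2 := by positivity
  -- key inequality: v*w + s*u < 1
  have hkey : v * w + s * u < 1 := by nlinarith [sq_nonneg (v - w), sq_nonneg (u - s)]
  have hkvs : s < k * v := by
    rw [hkdef, div_mul_eq_mul_div, lt_div_iff₀ (by linarith : (0:ℝ) < u - s)]
    nlinarith
  have hkwu : k * w < u := by
    rw [hkdef, div_mul_eq_mul_div, div_lt_iff₀ (by linarith : (0:ℝ) < u - s)]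
    nlinarith
  have hta : a < t := by
    rw [ht, hck, lt_div_iff₀ h1c]
    have h := mul_pos (sub_pos.mpr hkvs) (by positivity : (0:ℝ) < k * v + s)
    nlinarith [h, hv2, hs2]
  have htb : t < b := by
    rw [ht, hck, div_lt_iff₀ h1c]
    have h := mul_pos (sub_pos.mpr hkwu) (by positivity : (0:ℝ) < u + k * w)
    have e : b * (1 + k ^ 2) - k ^ 2 = (u - k * w) * (u + k * w) := by
      linear_combination k ^ 2 * hw2 - hu2
    linarith
  obtain ⟨r, hr⟩ : ∃ r : ℝ, r = Real.sqrt (1 + k ^ 2) := ⟨_, rfl⟩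
  have hr0 : 0 < r := by rw [hr]; exact Real.sqrt_pos.mpr h1c
  have hr2 : r ^ 2 = 1 + k ^ 2 := by rw [hr]; exact Real.sq_sqrt h1c.le
  have hst : Real.sqrt t = k / r := by
    have : t = (k / r) ^ 2 := by
      rw [ht, hck, div_pow, hr2]
    rw [this, Real.sqrt_sq (by positivity)]
  have hst1 : Real.sqrt (1 - t) = 1 / r := by
    have : 1 - t = (1 / r) ^ 2 := by
      rw [ht, hck, div_pow, hr2, one_pow]
      field_simp
      ring
    rw [this, Real.sqrt_sq (by positivity)]
  have ht0 : 0 < t := lt_trans ha hta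
  have ht1 : t < 1 := lt_trans htb hb
  have heq : Real.sqrt ((1 - t) * (1 - a)) + Real.sqrt (t * a)
      = Real.sqrt ((1 - t) * (1 - b)) + Real.sqrt (t * b) := by
    rw [Real.sqrt_mul (by linarith : (0:ℝ) ≤ 1 - t) (1 - a),
        Real.sqrt_mul (by linarith : (0:ℝ) ≤ 1 - t) (1 - b),
        Real.sqrt_mul ht0.le a, Real.sqrt_mul ht0.le b, ← hv, ← hw, ← hs, ← hu,
        hst, hst1]
    have h2 : v + k * s = w + k * u := by linear_combination -hk
    linear_combination (1 / r) * h2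
  refine ⟨⟨hta, htb⟩, heq, ?_⟩
  simp only [uniRate]
  rw [mul_comm (1 - a) (1 - t), mul_comm a t, heq]
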